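/- Supp(M/bM) ⊆ V(a) if and only if for every n ∈ ℕ there exists an a-filter regular M-sequence of length n in b. Consequently, if Supp(M/bM) ⊄ V(a), then any two maximal a-filter regular M-sequences in b have the same length. -/

import Mathlib

open CategoryTheory CategoryTheory.Limits Opposite

universe u

noncomputable section

namespace Paper

variable (R : Type u) [CommRing R]

/-- `x` is an `a`-filter regular `M`-sequence. -/
def IsFilterRegular (a : Ideal R) (M : Type u) [AddCommGroup M] [Module R M]
    {n : ℕ} (x : Fin n → R) : Prop :=
  ∀ i : Fin n, ∀ p ∈ associatedPrimes R
      (M ⧸ (Ideal.span (x '' {j | j < i}) • (⊤ : Submodule R M))),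
    ¬ a ≤ p → x i ∉ p

/-- `y` is a weak regular sequence on `X`. -/
def IsWeakRegular (S : Type*) [CommRing S] (X : Type*) [AddCommGroup X] [Module S X]
    {n : ℕ} (y : Fin n → S) : Prop :=
  ∀ i : Fin n, ∀ m : X ⧸ (Ideal.span (y '' {j | j < i}) • (⊤ : Submodule S X)),
    y i • m = 0 → m = 0

/-- The `i`-th Ext module `Ext^i_R(M, N)`. -/
abbrev ExtModule (i : ℕ) (M N : Type u) [AddCommGroup M] [Module R M]
    [AddCommGroup N] [Module R N] : ModuleCat.{u} R :=
  ((Ext R (ModuleCat.{u} R) i).obj (op (ModuleCat.of R M))).obj (ModuleCat.of R N)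

/-- The directed system `M/a^t M`. -/
theorem mapQ_trans {M : Type u} [AddCommGroup M] [Module R M] (p q r : Submodule R M)
    (h1 : p ≤ q) (h2 : q ≤ r) :
    Submodule.mapQ p r LinearMap.id (fun _ hm => h2 (h1 hm)) =
      (Submodule.mapQ q r LinearMap.id (fun _ hm => h2 hm)).comp
        (Submodule.mapQ p q LinearMap.id (fun _ hm => h1 hm)) := by
  ext x
  simp [Submodule.mapQ_apply]

/-- The directed system `M/a^t M`. -/
def quotPowersDiagram (a : Ideal R) (M : Type u) [AddCommGroup M] [Module R M] :
    ℕᵒᵖ ⥤ ModuleCat.{u} R where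
  obj t := ModuleCat.of R (M ⧸ ((a ^ (unop t)) • (⊤ : Submodule R M)))
  map {t t'} w := ModuleCat.ofHom (Submodule.mapQ _ _ LinearMap.id
    (fun m hm => Submodule.smul_mono (Ideal.pow_le_pow_right w.unop.down.down) le_rfl hm))
  map_id t := by apply ModuleCat.hom_ext; apply Submodule.linearMap_qext; rfl
  map_comp {t t' t''} f g := by
    apply ModuleCat.hom_ext
    exact mapQ_trans R _ _ _
      (Submodule.smul_mono (Ideal.pow_le_pow_right f.unop.down.down) le_rfl)
      (Submodule.smul_mono (Ideal.pow_le_pow_right g.unop.down.down) le_rfl)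

/-- The generalized local cohomology module `H^i_a(M, N) = colim_t Ext^i(M/a^t M, N)`. -/
def glc (a : Ideal R) (i : ℕ) (M N : Type u) [AddCommGroup M] [Module R M]
    [AddCommGroup N] [Module R N] : ModuleCat.{u} R :=
  colimit (((quotPowersDiagram R a M).op ⋙ Ext R (ModuleCat.{u} R) i) ⋙
    (evaluation _ _).obj (ModuleCat.of R N))

/-- The `a`-filter grade of `b` on `M`. -/
def filterGrade (a b : Ideal R) (M : Type u) [AddCommGroup M] [Module R M] : ℕ∞ :=
  sSup {n : ℕ∞ | ∃ k : ℕ, n = k ∧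
    ∃ x : Fin k → R, (∀ i, x i ∈ b) ∧ IsFilterRegular R a M x}

/-- `M` has a projective resolution of length at most `d`. -/
def HasProjDimLE (M : Type u) [AddCommGroup M] [Module R M] (d : ℕ) : Prop :=
  ∃ P : ProjectiveResolution (ModuleCat.of R M), ∀ i : ℕ, d < i → IsZero (P.complex.X i)

/-- The projective dimension of `M` (as an element of `ℕ∞`, with `⊤` meaning infinite). -/
def projDim (M : Type u) [AddCommGroup M] [Module R M] : ℕ∞ :=
  sInf {n : ℕ∞ | ∃ k : ℕ, n = k ∧ HasProjDimLE R M k}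

/-- The Krull dimension of a module, `dim M = dim R/Ann M`. -/
def moduleDim (M : Type u) [AddCommGroup M] [Module R M] : WithBot (WithTop ℕ) :=
  ringKrullDim (R ⧸ Module.annihilator R M)

/-- `cd_a(M, N)`: the greatest `i` with `H^i_a(M, N) ≠ 0`. -/
def cohomDim (a : Ideal R) (M N : Type u) [AddCommGroup M] [Module R M]
    [AddCommGroup N] [Module R N] : WithBot ℕ∞ :=
  sSup {i : WithBot ℕ∞ | ∃ k : ℕ, i = (k : ℕ∞) ∧ Nontrivial (glc R a k M N)}

/-- A nonzero module is secondary if every scalar acts surjectively or nilpotently. -/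
def IsSecondary (X : Type*) [AddCommGroup X] [Module R X] : Prop :=
  Nontrivial X ∧ ∀ r : R,
    Function.Surjective (fun x : X => r • x) ∨ r ∈ (Module.annihilator R X).radical

/-- The attached primes of `X`: the radicals of the annihilators of the terms of a
minimal secondary representation of `X`. -/
def attachedPrimes (X : Type u) [AddCommGroup X] [Module R X] : Set (Ideal R) :=
  {p | ∃ (k : ℕ) (S : Fin k → Submodule R X),
    (∀ i, IsSecondary R ↥(S i)) ∧ (⨆ i, S i) = ⊤ ∧
    (Function.Injective fun i => (Module.annihilator R ↥(S i)).radical) ∧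
    (∀ i : Fin k, (⨆ j ∈ {j | j ≠ i}, S j) ≠ ⊤) ∧
    ∃ i, (Module.annihilator R ↥(S i)).radical = p}

end Paper

open Paper CategoryTheory CategoryTheory.Limits



namespace Stmt7Aux

variable {R : Type u} [CommRing R]

/-! ### Torsion predicates -/

def Tor (P : Ideal R) {Q : Type u} [AddCommGroup Q] [Module R Q] (m : Q) : Prop :=
  ∃ s, s ∉ P ∧ s • m = 0

def LocReg (P : Ideal R) (z : R) (Q : Type u) [AddCommGroup Q] [Module R Q] : Prop :=
  ∀ m : Q, z • m = 0 → Tor P m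

def DP (P b : Ideal R) (Q : Type u) [AddCommGroup Q] [Module R Q] : Prop :=
  ∃ u : Q, ¬ Tor P u ∧ ∀ r ∈ b, Tor P (r • u)

variable {P b : Ideal R} {Q Q' : Type u} [AddCommGroup Q] [Module R Q]
  [AddCommGroup Q'] [Module R Q']

lemma not_tor_iff_ann_le {m : Q} : ¬ Tor P m ↔ (R ∙ m).annihilator ≤ P := by
  constructor
  · intro h r hr
    by_contra hrP
    exact h ⟨r, hrP, (Submodule.mem_annihilator_span_singleton m r).mp hr⟩
  · rintro h ⟨s, hs, hsm⟩
    exact hs (h ((Submodule.mem_annihilator_span_singleton m s).mpr hsm))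

lemma tor_zero (hP : P.IsPrime) : Tor P (0 : Q) :=
  ⟨1, fun h => hP.ne_top (P.eq_top_iff_one.mpr h), smul_zero 1⟩

lemma assOld [IsNoetherianRing R] {q : Ideal R} (hq : q ∈ associatedPrimes R Q) :
    q.IsPrime ∧ ∃ x : Q, q = (R ∙ x).annihilator := by
  obtain ⟨hp, x, hx⟩ := (isAssociatedPrime_iff).mp hq
  refine ⟨hp, x, hx.trans ?_⟩
  ext r
  rw [Submodule.mem_colon_singleton, Submodule.mem_bot, Submodule.mem_annihilator_span_singleton]

lemma assNew {q : Ideal R} (hp : q.IsPrime) (x : Q) (hx : q = (R ∙ x).annihilator) :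
    q ∈ associatedPrimes R Q := by
  have h : Submodule.colon (⊥ : Submodule R Q) {x} = q := by
    rw [hx]; ext r
    rw [Submodule.mem_colon_singleton, Submodule.mem_bot, Submodule.mem_annihilator_span_singleton]
  show (⊥ : Submodule R Q).IsAssociatedPrime q
  exact Submodule.isAssociatedPrime_def.mpr ⟨hp, x, by rw [h, hp.radical]⟩

lemma exists_associated_le (hP : P.IsPrime) [IsNoetherianRing R] (m : Q) (hm : ¬ Tor P m) :
    ∃ q ∈ associatedPrimes R Q, q ≤ P ∧ (R ∙ m).annihilator ≤ q := by
  classical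
  set G : Set (Ideal R) :=
    {J | ∃ v : Q, ¬ Tor P v ∧ (R ∙ m).annihilator ≤ (R ∙ v).annihilator ∧
      J = (R ∙ v).annihilator} with hG
  have hne : G.Nonempty := ⟨(R ∙ m).annihilator, m, hm, le_rfl, rfl⟩
  obtain ⟨q, hqG, hqmax⟩ :=
    set_has_maximal_iff_noetherian.mpr (inferInstance : IsNoetherian R R) G hne
  obtain ⟨v₀, hv₀, hmv₀, rfl⟩ := hqG
  have hle : (R ∙ v₀).annihilator ≤ P := not_tor_iff_ann_le.mp hv₀
  have hmax : ∀ v : Q, ¬ Tor P v → (R ∙ v₀).annihilator ≤ (R ∙ v).annihilator →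
      (R ∙ v).annihilator = (R ∙ v₀).annihilator := by
    intro v hv hlev
    by_contra hne'
    exact hqmax _ ⟨v, hv, le_trans hmv₀ hlev, rfl⟩ (lt_of_le_of_ne hlev (Ne.symm hne'))
  have hprime : ((R ∙ v₀).annihilator).IsPrime := by
    constructor
    · intro htop
      apply hv₀
      have h1 : (1 : R) ∈ (R ∙ v₀).annihilator := htop ▸ trivial
      have h0 := (Submodule.mem_annihilator_span_singleton v₀ 1).mp h1
      rw [one_smul] at h0
      rw [h0]
      exact tor_zero hP
    · intro r s hrs
      by_contra hcon
      push_neg at hcon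
      obtain ⟨hr, hs⟩ := hcon
      have hsv : ¬ Tor P (s • v₀) := by
        rintro ⟨t, ht, hts⟩
        have htv : ¬ Tor P (t • v₀) := by
          rintro ⟨t', ht', ht't⟩
          exact hv₀ ⟨t' * t, fun h => ((hP.mem_or_mem h).elim ht' ht), by
            rw [mul_smul]; exact ht't⟩
        have hlev : (R ∙ v₀).annihilator ≤ (R ∙ (t • v₀)).annihilator := by
          intro c hc
          rw [Submodule.mem_annihilator_span_singleton] at hc ⊢
          rw [smul_comm, hc, smul_zero]
        have heq := hmax _ htv hlev
        apply hs
        rw [← heq, Submodule.mem_annihilator_span_singleton]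
        rw [smul_comm] at hts
        exact hts
      have hlev : (R ∙ v₀).annihilator ≤ (R ∙ (s • v₀)).annihilator := by
        intro c hc
        rw [Submodule.mem_annihilator_span_singleton] at hc ⊢
        rw [smul_comm, hc, smul_zero]
      have heq := hmax _ hsv hlev
      apply hr
      rw [← heq, Submodule.mem_annihilator_span_singleton, smul_smul]
      exact (Submodule.mem_annihilator_span_singleton v₀ (r * s)).mp hrs
  exact ⟨_, assNew hprime v₀ rfl, hle, hmv₀⟩

lemma locReg_of_forall_ass (hP : P.IsPrime) [IsNoetherianRing R] {z : R}
    (h : ∀ q ∈ associatedPrimes R Q, q ≤ P → z ∉ q) : LocReg P z Q := by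
  intro m hzm
  by_contra hm
  obtain ⟨q, hq, hqP, hqm⟩ := exists_associated_le hP m hm
  exact h q hq hqP (hqm ((Submodule.mem_annihilator_span_singleton m z).mpr hzm))

lemma not_mem_ass_of_locReg [IsNoetherianRing R] {z : R} (h : LocReg P z Q)
    {q : Ideal R} (hq : q ∈ associatedPrimes R Q) (hqP : q ≤ P) : z ∉ q := by
  obtain ⟨hqp, u, rfl⟩ := assOld hq
  intro hz
  have hzu := (Submodule.mem_annihilator_span_singleton u z).mp hz
  exact (not_tor_iff_ann_le.mpr hqP) (h u hzu)

/-! ### Finiteness of associated primes -/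

lemma ass_subset_sub_quot [IsNoetherianRing R] {K : Type u} [AddCommGroup K] [Module R K]
    (U : Submodule R K) :
    associatedPrimes R K ⊆ associatedPrimes R U ∪ associatedPrimes R (K ⧸ U) := by
  intro p hp0
  obtain ⟨hp, w, rfl⟩ := assOld hp0
  by_cases hcase : ∃ c : R, c • w ∈ U ∧ c • w ≠ 0
  · obtain ⟨c, hcU, hc0⟩ := hcase
    have hc : c ∉ (Submodule.span R {w}).annihilator := by
      rw [Submodule.mem_annihilator_span_singleton]; exact hc0
    left
    refine assNew hp ⟨c • w, hcU⟩ ?_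
    ext r
    rw [Submodule.mem_annihilator_span_singleton, Submodule.mem_annihilator_span_singleton]
    constructor
    · intro hr
      apply Subtype.ext
      show r • (c • w) = 0
      rw [smul_comm, hr, smul_zero]
    · intro hr
      have : (r * c) • w = 0 := by
        have := congrArg Subtype.val hr
        simpa [mul_smul, smul_comm r c w] using this
      have hrc : r * c ∈ (Submodule.span R {w}).annihilator :=
        (Submodule.mem_annihilator_span_singleton w (r * c)).mpr this
      rcases hp.mem_or_mem hrc with h | h
      · exact (Submodule.mem_annihilator_span_singleton w r).mp h
      · exact absurd h hc
  · push_neg at hcase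
    right
    refine assNew hp (U.mkQ w) ?_
    ext r
    rw [Submodule.mem_annihilator_span_singleton, Submodule.mem_annihilator_span_singleton]
    constructor
    · intro hr
      rw [← map_smul, hr, map_zero]
    · intro hr
      rw [← map_smul] at hr
      have : r • w ∈ U := (Submodule.Quotient.mk_eq_zero U).mp hr
      exact hcase r this

lemma ass_span_singleton_eq {K : Type u} [AddCommGroup K] [Module R K]
    [IsNoetherianRing R] (u : K) (hp : ((Submodule.span R {u}).annihilator).IsPrime) :
    associatedPrimes R ↥(Submodule.span R {u}) = {(Submodule.span R {u}).annihilator} := by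
  have hker : LinearMap.ker (LinearMap.toSpanSingleton R K u)
      = (Submodule.span R {u}).annihilator := by
    ext r
    rw [LinearMap.mem_ker, Submodule.mem_annihilator_span_singleton,
      LinearMap.toSpanSingleton_apply]
  have e : (R ⧸ (Submodule.span R {u}).annihilator) ≃ₗ[R] ↥(Submodule.span R {u}) :=
    Submodule.quotEquivOfEq _ _ hker.symm ≪≫ₗ
      (LinearMap.toSpanSingleton R K u).quotKerEquivRange ≪≫ₗ
      LinearEquiv.ofEq _ _ (LinearMap.span_singleton_eq_range R K u).symm
  rw [← LinearEquiv.AssociatedPrimes.eq e,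
    associatedPrimes.eq_singleton_of_isPrimary hp.isPrimary, Ideal.IsPrime.radical hp]

lemma associatedPrimes_finite (M : Type u) [AddCommGroup M] [Module R M]
    [IsNoetherianRing R] [Module.Finite R M] : (associatedPrimes R M).Finite := by
  have hNoeth : IsNoetherian R M := isNoetherian_of_isNoetherianRing_of_finite R M
  by_contra hinf
  set S : Set (Submodule R M) := {N | ¬ (associatedPrimes R (M ⧸ N)).Finite} with hS
  have hSne : S.Nonempty := by
    refine ⟨⊥, ?_⟩
    have e : (M ⧸ (⊥ : Submodule R M)) ≃ₗ[R] M := Submodule.quotEquivOfEqBot ⊥ rfl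
    rw [hS, Set.mem_setOf_eq, LinearEquiv.AssociatedPrimes.eq e]
    exact hinf
  obtain ⟨N₀, hN₀, hmax⟩ := set_has_maximal_iff_noetherian.mpr hNoeth S hSne
  rcases subsingleton_or_nontrivial (M ⧸ N₀) with hsub | hnt
  · exact hN₀ (by rw [associatedPrimes.eq_empty_of_subsingleton]; exact Set.finite_empty)
  obtain ⟨p, hp⟩ := associatedPrimes.nonempty R (M ⧸ N₀)
  obtain ⟨hpp, u, hpu⟩ := assOld hp
  have hu0 : u ≠ 0 := by
    rintro rfl
    apply hpp.ne_top
    rw [hpu, Ideal.eq_top_iff_one, Submodule.mem_annihilator_span_singleton, smul_zero]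
  set N₁ : Submodule R M := (Submodule.span R {u}).comap N₀.mkQ with hN₁
  have hle : N₀ ≤ N₁ := by
    intro x hx
    rw [hN₁, Submodule.mem_comap, Submodule.mkQ_apply,
      (Submodule.Quotient.mk_eq_zero N₀).mpr hx]
    exact Submodule.zero_mem _
  have hlt : N₀ < N₁ := by
    obtain ⟨w, hw⟩ := N₀.mkQ_surjective u
    refine lt_of_le_of_ne hle (fun hEq => ?_)
    have hwN₁ : w ∈ N₁ := by
      rw [hN₁, Submodule.mem_comap, Submodule.mkQ_apply]
      rw [Submodule.mkQ_apply] at hw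
      rw [hw]; exact Submodule.mem_span_singleton_self u
    rw [← hEq] at hwN₁
    exact hu0 (by rw [← hw, Submodule.mkQ_apply, (Submodule.Quotient.mk_eq_zero N₀).mpr hwN₁])
  have hfin1 : (associatedPrimes R (M ⧸ N₁)).Finite := by
    by_contra h
    exact hmax N₁ h hlt
  have hmap : N₁.map N₀.mkQ = Submodule.span R {u} :=
    Submodule.map_comap_eq_self (by rw [Submodule.range_mkQ]; exact le_top)
  have e2 : ((M ⧸ N₀) ⧸ (N₁.map N₀.mkQ)) ≃ₗ[R] M ⧸ N₁ :=
    Submodule.quotientQuotientEquivQuotient N₀ N₁ hle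
  have hsub2 : associatedPrimes R (M ⧸ N₀) ⊆
      associatedPrimes R ↥(N₁.map N₀.mkQ) ∪ associatedPrimes R (M ⧸ N₁) := by
    intro q hq
    rcases ass_subset_sub_quot (N₁.map N₀.mkQ) hq with h | h
    · exact Or.inl h
    · exact Or.inr ((LinearEquiv.AssociatedPrimes.eq e2) ▸ h)
  have hfinU : (associatedPrimes R ↥(N₁.map N₀.mkQ)).Finite := by
    rw [hmap, ass_span_singleton_eq u (hpu ▸ hpp)]
    exact Set.finite_singleton _
  exact hN₀ ((hfinU.union hfin1).subset hsub2)

/-! ### Prime avoidance -/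

lemma exists_avoid (b : Ideal R) (F : Set (Ideal R)) (hF : F.Finite)
    (hprime : ∀ q ∈ F, q.IsPrime) (hnle : ∀ q ∈ F, ¬ b ≤ q) :
    ∃ z ∈ b, ∀ q ∈ F, z ∉ q := by
  classical
  by_contra hcon
  push_neg at hcon
  have hsub : (b : Set R) ⊆ ⋃ q ∈ (hF.toFinset : Set (Ideal R)), ((fun q => q) q : Ideal R) := by
    intro z hz
    obtain ⟨q, hqF, hzq⟩ := hcon z hz
    exact Set.mem_biUnion (hF.mem_toFinset.mpr hqF) hzq
  obtain ⟨q, hqs, hle⟩ :=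
    (Ideal.subset_union_prime ⊥ ⊥ (fun q hq _ _ => hprime q (hF.mem_toFinset.mp hq))).mp hsub
  exact hnle q (hF.mem_toFinset.mp hqs) hle

/-! ### Transport lemmas -/

lemma tor_equiv (e : Q ≃ₗ[R] Q') {m : Q} (h : Tor P m) : Tor P (e m) := by
  obtain ⟨s, hs, hsm⟩ := h
  exact ⟨s, hs, by rw [← map_smul, hsm, map_zero]⟩

lemma locReg_equiv (e : Q ≃ₗ[R] Q') {z : R} (h : LocReg P z Q) : LocReg P z Q' := by
  intro m hm
  have := h (e.symm m) (by
    apply_fun e using e.injective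
    rw [map_smul, map_zero, e.apply_symm_apply]; exact hm)
  simpa using tor_equiv e this

lemma dp_equiv (e : Q ≃ₗ[R] Q') (h : DP P b Q) : DP P b Q' := by
  obtain ⟨u, hu, hb⟩ := h
  refine ⟨e u, fun hc => hu ?_, fun r hr => by
    rw [← map_smul]; exact tor_equiv e (hb r hr)⟩
  have := tor_equiv e.symm hc
  simpa using this

lemma mem_span_smul_top {β : R} {m : Q} :
    m ∈ (Ideal.span {β} • (⊤ : Submodule R Q)) ↔ ∃ n : Q, β • n = m := by
  constructor
  · intro h
    refine Submodule.smul_induction_on h ?_ ?_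
    · intro r hr n _
      obtain ⟨c, rfl⟩ := Ideal.mem_span_singleton'.mp hr
      exact ⟨c • n, by rw [smul_smul, mul_comm]⟩
    · rintro x y ⟨n₁, rfl⟩ ⟨n₂, rfl⟩
      exact ⟨n₁ + n₂, by rw [smul_add]⟩
  · rintro ⟨n, rfl⟩
    exact Submodule.smul_mem_smul (Ideal.mem_span_singleton_self β) trivial

lemma tor_mk_iff {W : Submodule R Q} {m : Q} :
    Tor P (Submodule.Quotient.mk m : Q ⧸ W) ↔ ∃ s, s ∉ P ∧ s • m ∈ W := by
  constructor
  · rintro ⟨s, hs, hsm⟩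
    rw [← Submodule.Quotient.mk_smul, Submodule.Quotient.mk_eq_zero] at hsm
    exact ⟨s, hs, hsm⟩
  · rintro ⟨s, hs, hsm⟩
    exact ⟨s, hs, by rw [← Submodule.Quotient.mk_smul, Submodule.Quotient.mk_eq_zero]; exact hsm⟩

/-- The two-step quotient by `I` then `J` is the quotient by `I ⊔ J`. -/
noncomputable def quotTower (I J : Ideal R) (N : Type u) [AddCommGroup N] [Module R N] :
    ((N ⧸ (I • (⊤ : Submodule R N))) ⧸
      (J • (⊤ : Submodule R (N ⧸ (I • (⊤ : Submodule R N)))))) ≃ₗ[R]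
      N ⧸ ((I ⊔ J) • (⊤ : Submodule R N)) := by
  have h : (I • (⊤ : Submodule R N)) ≤ ((I ⊔ J) • (⊤ : Submodule R N)) :=
    Submodule.smul_mono le_sup_left le_rfl
  have hmap : ((I ⊔ J) • (⊤ : Submodule R N)).map (I • (⊤ : Submodule R N)).mkQ
      = J • (⊤ : Submodule R (N ⧸ (I • (⊤ : Submodule R N)))) := by
    rw [Submodule.map_smul'', Submodule.map_top, Submodule.range_mkQ, Submodule.sup_smul]
    have hbot : I • (⊤ : Submodule R (N ⧸ (I • (⊤ : Submodule R N)))) = ⊥ := by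
      rw [eq_bot_iff, Submodule.smul_le]
      intro r hr n _
      obtain ⟨w, rfl⟩ := Submodule.Quotient.mk_surjective _ n
      rw [Submodule.mem_bot, ← Submodule.Quotient.mk_smul, Submodule.Quotient.mk_eq_zero]
      exact Submodule.smul_mem_smul hr trivial
    rw [hbot, bot_sup_eq]
  exact (Submodule.quotEquivOfEq _ _ hmap.symm) ≪≫ₗ
    Submodule.quotientQuotientEquivQuotient _ _ h

/-- Quotient congruence along an equality of ideals. -/
noncomputable def qCongr {I I' : Ideal R} (N : Type u) [AddCommGroup N] [Module R N]
    (h : I = I') : (N ⧸ (I • (⊤ : Submodule R N))) ≃ₗ[R] N ⧸ (I' • (⊤ : Submodule R N)) :=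
  Submodule.quotEquivOfEq _ _ (by rw [h])

lemma swap_lemma (hP : P.IsPrime) (α β : R)
    (hα : LocReg P α Q) (hβα : LocReg P β (Q ⧸ (Ideal.span {α} • (⊤ : Submodule R Q)))) :
    LocReg P α (Q ⧸ (Ideal.span {β} • (⊤ : Submodule R Q))) := by
  intro mbar hm
  obtain ⟨m, rfl⟩ := Submodule.Quotient.mk_surjective _ mbar
  rw [← Submodule.Quotient.mk_smul, Submodule.Quotient.mk_eq_zero] at hm
  obtain ⟨n, hn⟩ := mem_span_smul_top.mp hm
  have hβn : β • (Submodule.Quotient.mk n :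
      Q ⧸ (Ideal.span {α} • (⊤ : Submodule R Q))) = 0 := by
    rw [← Submodule.Quotient.mk_smul, Submodule.Quotient.mk_eq_zero]
    exact mem_span_smul_top.mpr ⟨m, hn.symm⟩
  obtain ⟨s, hs, hsn⟩ := hβα _ hβn
  rw [← Submodule.Quotient.mk_smul, Submodule.Quotient.mk_eq_zero] at hsn
  obtain ⟨n₁, hn₁⟩ := mem_span_smul_top.mp hsn
  have hkey : α • (s • m - β • n₁) = 0 := by
    have : α • (s • m) = β • (s • n) := by
      rw [smul_comm α s, ← hn, smul_comm s β]
    rw [smul_sub, this, ← hn₁, smul_comm β α, sub_self]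
  obtain ⟨t, ht, hts⟩ := hα _ hkey
  refine ⟨t * s, fun hmem => ((hP.mem_or_mem hmem).elim ht hs), ?_⟩
  rw [← Submodule.Quotient.mk_smul, Submodule.Quotient.mk_eq_zero]
  rw [smul_sub] at hts
  have : (t * s) • m = t • (β • n₁) := by
    rw [mul_smul]
    have := sub_eq_zero.mp hts
    rw [this]
  rw [this]
  exact mem_span_smul_top.mpr ⟨t • n₁, by rw [smul_comm]⟩

lemma exchange (hP : P.IsPrime) (ξ η : R) (hηb : η ∈ b)
    (hξ : LocReg P ξ Q) (hη : LocReg P η Q)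
    (h : DP P b (Q ⧸ (Ideal.span {ξ} • (⊤ : Submodule R Q)))) :
    DP P b (Q ⧸ (Ideal.span {η} • (⊤ : Submodule R Q))) := by
  obtain ⟨ubar, hu, hub⟩ := h
  obtain ⟨u, rfl⟩ := Submodule.Quotient.mk_surjective _ ubar
  have hηu := hub η hηb
  rw [← Submodule.Quotient.mk_smul] at hηu
  obtain ⟨s₁, hs₁, hs₁m⟩ := tor_mk_iff.mp hηu
  rw [smul_smul] at hs₁m
  obtain ⟨v, hv⟩ := mem_span_smul_top.mp hs₁m
  refine ⟨Submodule.Quotient.mk v, ?_, ?_⟩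
  · rw [tor_mk_iff]
    rintro ⟨t, ht, htv⟩
    obtain ⟨v', hv'⟩ := mem_span_smul_top.mp htv
    have hkey : η • ((t * s₁) • u - ξ • v') = 0 := by
      linear_combination (norm := module) -(t • hv) - ξ • hv'
    obtain ⟨t₂, ht₂, ht₂e⟩ := hη _ hkey
    apply hu
    rw [tor_mk_iff]
    refine ⟨t₂ * (t * s₁), fun hmem => ?_, ?_⟩
    · rcases hP.mem_or_mem hmem with h' | h'
      · exact ht₂ h'
      · rcases hP.mem_or_mem h' with h'' | h''
        · exact ht h''
        · exact hs₁ h''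
    · rw [smul_sub, sub_eq_zero] at ht₂e
      rw [← smul_smul, ht₂e]
      exact mem_span_smul_top.mpr ⟨t₂ • v', by rw [smul_comm t₂ ξ v']⟩
  · intro r hr
    have hru := hub r hr
    rw [← Submodule.Quotient.mk_smul] at hru
    obtain ⟨s, hs, hsm⟩ := tor_mk_iff.mp hru
    rw [smul_smul] at hsm
    obtain ⟨w, hw⟩ := mem_span_smul_top.mp hsm
    have hkey : ξ • ((s * r) • v - (s₁ * η) • w) = 0 := by
      linear_combination (norm := module) (s * r) • hv - (s₁ * η) • hw
    obtain ⟨t, ht, hte⟩ := hξ _ hkey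
    rw [← Submodule.Quotient.mk_smul, tor_mk_iff]
    refine ⟨t * s, fun hmem => (hP.mem_or_mem hmem).elim ht hs, ?_⟩
    rw [smul_sub, sub_eq_zero] at hte
    have : (t * s) • r • v = η • ((t * s₁) • w) := by
      linear_combination (norm := module) hte
    rw [this]
    exact mem_span_smul_top.mpr ⟨(t * s₁) • w, rfl⟩

/-! ### Fin bookkeeping -/

section FinLemmas
variable {α : Type*}

lemma image_lt_castSucc {n : ℕ} (x : Fin (n + 1) → α) (i : Fin n) :
    (fun j : Fin n => x j.castSucc) '' {j | j < i} = x '' {j | j < i.castSucc} := by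
  ext r
  constructor
  · rintro ⟨j, hj, rfl⟩
    refine ⟨j.castSucc, ?_, rfl⟩
    show (j.castSucc : ℕ) < (i.castSucc : ℕ)
    rw [Fin.coe_castSucc, Fin.coe_castSucc]
    exact hj
  · rintro ⟨j, hj, rfl⟩
    have hj' : (j : ℕ) < (i : ℕ) := hj
    have hjn : (j : ℕ) < n := lt_of_lt_of_le hj' (Nat.le_of_lt i.isLt)
    refine ⟨⟨(j : ℕ), hjn⟩, hj', ?_⟩
    congr 1

lemma set_lt_succ {n : ℕ} (i : Fin n) :
    {j : Fin (n + 1) | j < i.succ} = {j | j < i.castSucc} ∪ {i.castSucc} := by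
  ext j
  simp only [Set.mem_setOf_eq, Set.mem_union, Set.mem_singleton_iff, Fin.lt_def,
    Fin.val_succ, Fin.coe_castSucc, Fin.ext_iff]
  omega

lemma image_univ_eq {n : ℕ} (x : Fin (n + 1) → α) :
    x '' Set.univ = x '' {j | j < Fin.last n} ∪ {x (Fin.last n)} := by
  ext r
  simp only [Set.image_univ, Set.mem_range, Set.mem_union, Set.mem_image,
    Set.mem_setOf_eq, Set.mem_singleton_iff]
  constructor
  · rintro ⟨j, rfl⟩
    rcases eq_or_ne j (Fin.last n) with rfl | hne
    · exact Or.inr rfl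
    · exact Or.inl ⟨j, Fin.lt_last_iff_ne_last.mpr hne, rfl⟩
  · rintro (⟨j, _, rfl⟩ | rfl)
    exacts [⟨j, rfl⟩, ⟨Fin.last n, rfl⟩]

lemma image_univ_trunc {n : ℕ} (x : Fin (n + 1) → α) :
    (fun j : Fin n => x j.castSucc) '' Set.univ = x '' {j | j < Fin.last n} := by
  ext r
  simp only [Set.image_univ, Set.mem_range, Set.mem_image, Set.mem_setOf_eq]
  constructor
  · rintro ⟨j, rfl⟩
    refine ⟨j.castSucc, ?_, rfl⟩
    show (j.castSucc : ℕ) < (Fin.last n : ℕ)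
    rw [Fin.coe_castSucc, Fin.val_last]
    exact j.isLt
  · rintro ⟨j, hj, rfl⟩
    have hj' : (j : ℕ) < (Fin.last n : ℕ) := hj
    rw [Fin.val_last] at hj'
    refine ⟨⟨(j : ℕ), hj'⟩, ?_⟩
    congr 1

lemma snoc_comp_castSucc {n : ℕ} (x : Fin n → α) (z : α) :
    (fun j : Fin n => (Fin.snoc x z : Fin (n + 1) → α) j.castSucc) = x :=
  funext fun j => by simp

lemma snoc_image_lt_castSucc {n : ℕ} (x : Fin n → α) (z : α) (i : Fin n) :
    (Fin.snoc x z : Fin (n + 1) → α) '' {j | j < i.castSucc} = x '' {j | j < i} := by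
  rw [← image_lt_castSucc (Fin.snoc x z) i, snoc_comp_castSucc]

lemma snoc_image_lt_last {n : ℕ} (x : Fin n → α) (z : α) :
    (Fin.snoc x z : Fin (n + 1) → α) '' {j | j < Fin.last n} = x '' Set.univ := by
  rw [← image_univ_trunc (Fin.snoc x z), snoc_comp_castSucc]

lemma image_lt_zero_eq_empty {n : ℕ} (x : Fin (n + 1) → α) :
    x '' {j | j < (0 : Fin (n + 1))} = ∅ := by
  have : {j : Fin (n + 1) | j < 0} = ∅ := by
    ext j; simp [Fin.lt_def]
  rw [this, Set.image_empty]

lemma image_univ_fin_zero (x : Fin 0 → α) : x '' Set.univ = ∅ := by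
  rw [Set.image_univ, Set.range_eq_empty]

end FinLemmas

/-! ### Step transport helpers -/

section Shifts
variable {N : Type u} [AddCommGroup N] [Module R N]

/-- `(N ⧸ I) ⧸ J ≃ N ⧸ K` when `K = I ⊔ J`. -/
noncomputable def towerE (I J K : Ideal R) (h : K = I ⊔ J) :
    ((N ⧸ (I • (⊤ : Submodule R N))) ⧸
      (J • (⊤ : Submodule R (N ⧸ (I • (⊤ : Submodule R N)))))) ≃ₗ[R]
      N ⧸ (K • (⊤ : Submodule R N)) :=
  quotTower I J N ≪≫ₗ qCongr N h.symm

lemma step_up_locReg {w : R} {I J K : Ideal R} (h : K = I ⊔ J)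
    (hw : LocReg P w (N ⧸ (K • (⊤ : Submodule R N)))) :
    LocReg P w ((N ⧸ (I • (⊤ : Submodule R N))) ⧸
      (J • (⊤ : Submodule R (N ⧸ (I • (⊤ : Submodule R N)))))) :=
  locReg_equiv (towerE I J K h).symm hw

lemma step_down_locReg {w : R} {I J K : Ideal R} (h : K = I ⊔ J)
    (hw : LocReg P w ((N ⧸ (I • (⊤ : Submodule R N))) ⧸
      (J • (⊤ : Submodule R (N ⧸ (I • (⊤ : Submodule R N))))))) :
    LocReg P w (N ⧸ (K • (⊤ : Submodule R N))) :=
  locReg_equiv (towerE I J K h) hw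

lemma step_up_dp {I J K : Ideal R} (h : K = I ⊔ J)
    (hw : DP P b (N ⧸ (K • (⊤ : Submodule R N)))) :
    DP P b ((N ⧸ (I • (⊤ : Submodule R N))) ⧸
      (J • (⊤ : Submodule R (N ⧸ (I • (⊤ : Submodule R N)))))) :=
  dp_equiv (towerE I J K h).symm hw

lemma step_down_dp {I J K : Ideal R} (h : K = I ⊔ J)
    (hw : DP P b ((N ⧸ (I • (⊤ : Submodule R N))) ⧸
      (J • (⊤ : Submodule R (N ⧸ (I • (⊤ : Submodule R N))))))) :
    DP P b (N ⧸ (K • (⊤ : Submodule R N))) :=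
  dp_equiv (towerE I J K h) hw

end Shifts

/-! ### The main induction -/

lemma mainLoc [IsNoetherianRing R] (hP : P.IsPrime) :
    ∀ (k : ℕ) (N : Type u) [AddCommGroup N] [Module R N] [Module.Finite R N]
      (y : Fin k → R), (∀ i, y i ∈ b) →
      (∀ i, LocReg P (y i) (N ⧸ (Ideal.span (y '' {j | j < i}) • (⊤ : Submodule R N)))) →
      DP P b (N ⧸ (Ideal.span (y '' Set.univ) • (⊤ : Submodule R N))) →
      ∀ (n : ℕ) (x : Fin n → R), (∀ i, x i ∈ b) →
      (∀ i, LocReg P (x i) (N ⧸ (Ideal.span (x '' {j | j < i}) • (⊤ : Submodule R N)))) →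
      n ≤ k := by
  intro k
  induction k with
  | zero =>
    intro N _ _ _ y _ _ hDP n x hxb hx
    cases n with
    | zero => exact le_refl 0
    | succ n' =>
      exfalso
      obtain ⟨u, hu, hub⟩ := hDP
      have h0 : Ideal.span (y '' Set.univ) = Ideal.span (x '' {j | j < (0 : Fin (n' + 1))}) := by
        rw [image_univ_fin_zero, image_lt_zero_eq_empty]
      have hx0 : LocReg P (x 0) (N ⧸ (Ideal.span (y '' Set.univ) • (⊤ : Submodule R N))) :=
        locReg_equiv (qCongr N h0.symm) (hx 0)
      obtain ⟨s, hs, hsu⟩ := hub (x 0) (hxb 0)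
      have hx0u : (x 0) • (s • u) = 0 := by rw [smul_comm]; exact hsu
      obtain ⟨t, ht, htsu⟩ := hx0 _ hx0u
      exact hu ⟨t * s, fun hmem => (hP.mem_or_mem hmem).elim ht hs, by
        rw [mul_smul]; exact htsu⟩
  | succ k' IH =>
    intro N _ _ _ y hyb hy hDP n x hxb hx
    cases n with
    | zero => exact Nat.zero_le _
    | succ n' =>
      classical
      set F : Set (Ideal R) := {q | q ≤ P ∧
        ((∃ i : Fin (n' + 1), q ∈ associatedPrimes R
            (N ⧸ (Ideal.span (x '' {j | j < i}) • (⊤ : Submodule R N)))) ∨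
         (∃ i : Fin (k' + 1), q ∈ associatedPrimes R
            (N ⧸ (Ideal.span (y '' {j | j < i}) • (⊤ : Submodule R N))))) } with hF
      have hFfin : F.Finite := by
        apply Set.Finite.subset (Set.Finite.union
          (Set.finite_iUnion (fun i : Fin (n' + 1) => associatedPrimes_finite
            (N ⧸ (Ideal.span (x '' {j | j < i}) • (⊤ : Submodule R N)))))
          (Set.finite_iUnion (fun i : Fin (k' + 1) => associatedPrimes_finite
            (N ⧸ (Ideal.span (y '' {j | j < i}) • (⊤ : Submodule R N))))))
        rintro q ⟨_, h | h⟩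
        · exact Or.inl (Set.mem_iUnion.mpr h)
        · exact Or.inr (Set.mem_iUnion.mpr h)
      have hFprime : ∀ q ∈ F, q.IsPrime := by
        rintro q ⟨_, ⟨i, hq⟩ | ⟨i, hq⟩⟩ <;> exact hq.isPrime
      have hFnle : ∀ q ∈ F, ¬ b ≤ q := by
        rintro q ⟨hqP, ⟨i, hq⟩ | ⟨i, hq⟩⟩ hble
        · exact not_mem_ass_of_locReg (hx i) hq hqP (hble (hxb i))
        · exact not_mem_ass_of_locReg (hy i) hq hqP (hble (hyb i))
      obtain ⟨z, hzb, hz⟩ := exists_avoid b F hFfin hFprime hFnle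
      have hzX : ∀ i : Fin (n' + 1), LocReg P z
          (N ⧸ (Ideal.span (x '' {j | j < i}) • (⊤ : Submodule R N))) := fun i =>
        locReg_of_forall_ass hP (fun q hq hqP => hz q ⟨hqP, Or.inl ⟨i, hq⟩⟩)
      have hzY : ∀ i : Fin (k' + 1), LocReg P z
          (N ⧸ (Ideal.span (y '' {j | j < i}) • (⊤ : Submodule R N))) := fun i =>
        locReg_of_forall_ass hP (fun q hq hqP => hz q ⟨hqP, Or.inr ⟨i, hq⟩⟩)
      -- span-sup identities along the sequences
      have hspx : ∀ i : Fin n', Ideal.span (x '' {j | j < i.succ})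
          = Ideal.span (x '' {j | j < i.castSucc}) ⊔ Ideal.span {x i.castSucc} := by
        intro i
        rw [← Ideal.span_union, set_lt_succ i, Set.image_union, Set.image_singleton]
      have hspy : ∀ i : Fin k', Ideal.span (y '' {j | j < i.succ})
          = Ideal.span (y '' {j | j < i.castSucc}) ⊔ Ideal.span {y i.castSucc} := by
        intro i
        rw [← Ideal.span_union, set_lt_succ i, Set.image_union, Set.image_singleton]
      -- x' is a LocReg sequence on N/zN
      have hx'seq : ∀ i : Fin n', LocReg P (x i.castSucc)
          ((N ⧸ (Ideal.span {z} • (⊤ : Submodule R N))) ⧸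
            (Ideal.span ((fun j : Fin n' => x j.castSucc) '' {j | j < i}) •
              (⊤ : Submodule R (N ⧸ (Ideal.span {z} • (⊤ : Submodule R N)))))) := by
        intro i
        have hβα := step_up_locReg (hspx i) (hzX i.succ)
        have hsw := swap_lemma hP (x i.castSucc) z (hx i.castSucc) hβα
        have hA := step_down_locReg rfl hsw
        exact step_up_locReg (by rw [image_lt_castSucc, sup_comm]) hA
      -- y' is a LocReg sequence on N/zN
      have hy'seq : ∀ i : Fin k', LocReg P (y i.castSucc)
          ((N ⧸ (Ideal.span {z} • (⊤ : Submodule R N))) ⧸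
            (Ideal.span ((fun j : Fin k' => y j.castSucc) '' {j | j < i}) •
              (⊤ : Submodule R (N ⧸ (Ideal.span {z} • (⊤ : Submodule R N)))))) := by
        intro i
        have hβα := step_up_locReg (hspy i) (hzY i.succ)
        have hsw := swap_lemma hP (y i.castSucc) z (hy i.castSucc) hβα
        have hA := step_down_locReg rfl hsw
        exact step_up_locReg (by rw [image_lt_castSucc, sup_comm]) hA
      -- the DP datum descends to N/zN
      have hsptop : Ideal.span (y '' Set.univ)
          = Ideal.span (y '' {j | j < Fin.last k'}) ⊔ Ideal.span {y (Fin.last k')} := by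
        rw [image_univ_eq, ← Ideal.span_union]
      have hDP1 := step_up_dp hsptop hDP
      have hDP2 := exchange hP (y (Fin.last k')) z hzb (hy (Fin.last k')) (hzY (Fin.last k')) hDP1
      have hDP3 := step_down_dp rfl hDP2
      have hDP' : DP P b
          ((N ⧸ (Ideal.span {z} • (⊤ : Submodule R N))) ⧸
            (Ideal.span ((fun j : Fin k' => y j.castSucc) '' Set.univ) •
              (⊤ : Submodule R (N ⧸ (Ideal.span {z} • (⊤ : Submodule R N)))))) :=
        step_up_dp (by rw [image_univ_trunc, sup_comm]) hDP3
      exact Nat.succ_le_succ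
        (IH (N ⧸ (Ideal.span {z} • (⊤ : Submodule R N)))
          (fun j : Fin k' => y j.castSucc) (fun i => hyb _) hy'seq hDP'
          n' (fun j : Fin n' => x j.castSucc) (fun i => hxb _) hx'seq)


/-! ### Cayley-Hamilton support lemma -/

lemma ann_quot_le_prime {M : Type u} [AddCommGroup M] [Module R M] [Module.Finite R M]
    {b q : Ideal R} (hq : q.IsPrime) (hAnn : Module.annihilator R M ≤ q) (hbq : b ≤ q) :
    Module.annihilator R (M ⧸ (b • (⊤ : Submodule R M))) ≤ q := by
  intro s hs
  have hrange : LinearMap.range (s • (LinearMap.id : M →ₗ[R] M)) ≤ b • (⊤ : Submodule R M) := by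
    rintro w ⟨m, rfl⟩
    have hmk : (s • (Submodule.Quotient.mk m) : M ⧸ (b • (⊤ : Submodule R M))) = 0 :=
      Module.mem_annihilator.mp hs _
    rw [← Submodule.Quotient.mk_smul, Submodule.Quotient.mk_eq_zero] at hmk
    simpa using hmk
  obtain ⟨p, hmonic, -, hcoeff, heval⟩ :=
    LinearMap.exists_monic_and_coeff_mem_pow_and_aeval_eq_zero_of_range_le_smul R
      (s • (LinearMap.id : M →ₗ[R] M)) b hrange
  have hev : ∀ m : M, (p.eval s) • m = 0 := by
    intro m
    have h1 : (s • (LinearMap.id : M →ₗ[R] M)) =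
        (algebraMap R (Module.End R M)) s := by
      ext m; simp [Module.algebraMap_end_eq_smul_id]
    have h2 : Polynomial.aeval ((algebraMap R (Module.End R M)) s) p
        = (algebraMap R (Module.End R M)) (p.eval s) := by
      rw [Polynomial.aeval_algebraMap_apply]
      simp [Polynomial.coe_aeval_eq_eval]
    have h3 : ((algebraMap R (Module.End R M)) (p.eval s)) m = 0 := by
      rw [← h2, ← h1, heval]; rfl
    simpa [Module.algebraMap_end_eq_smul_id] using h3
  have hevq : p.eval s ∈ q := hAnn (Module.mem_annihilator.mpr hev)
  have hn : s ^ p.natDegree ∈ q := by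
    have hexp := Polynomial.eval_eq_sum_range (p := p) (x := s)
    rw [Finset.sum_range_succ, hmonic.coeff_natDegree, one_mul] at hexp
    have hsum : ∑ i ∈ Finset.range p.natDegree, p.coeff i * s ^ i ∈ q := by
      apply Ideal.sum_mem
      intro i hi
      rw [Finset.mem_range] at hi
      have hc : p.coeff i ∈ b ^ (p.natDegree - i) := hcoeff i
      have hcb : p.coeff i ∈ b :=
        (Ideal.pow_le_self (Nat.sub_ne_zero_of_lt hi)) hc
      exact Ideal.mul_mem_right _ _ (hbq hcb)
    have hrw : s ^ p.natDegree = p.eval s - ∑ i ∈ Finset.range p.natDegree, p.coeff i * s ^ i := by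
      rw [hexp]; ring
    rw [hrw]
    exact Ideal.sub_mem _ hevq hsum
  exact hq.mem_of_pow_mem _ hn

/-! ### Top layer lemmas -/

lemma snoc_image_univ {α : Type*} {n : ℕ} (x : Fin n → α) (z : α) :
    (Fin.snoc x z : Fin (n + 1) → α) '' Set.univ = x '' Set.univ ∪ {z} := by
  rw [image_univ_eq, snoc_image_lt_last, Fin.snoc_last]

lemma fr_to_locReg {a : Ideal R} {M : Type u} [AddCommGroup M] [Module R M]
    [IsNoetherianRing R] {P : Ideal R} (hP : P.IsPrime) (hPa : ¬ a ≤ P) {n : ℕ}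
    {x : Fin n → R} (hFR : Paper.IsFilterRegular R a M x) :
    ∀ i, LocReg P (x i) (M ⧸ (Ideal.span (x '' {j | j < i}) • (⊤ : Submodule R M))) :=
  fun i => locReg_of_forall_ass hP (fun q hq hqP =>
    hFR i q hq (fun haq => hPa (haq.trans hqP)))

lemma dp_of_ass [IsNoetherianRing R] {Q : Type u} [AddCommGroup Q] [Module R Q] {q b : Ideal R}
    (hq : q ∈ associatedPrimes R Q) (hbq : b ≤ q) : DP q b Q := by
  obtain ⟨hqp, u, hu⟩ := assOld hq
  refine ⟨u, ?_, ?_⟩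
  · exact not_tor_iff_ann_le.mpr (le_of_eq hu.symm)
  · intro r hr
    have h0 : r • u = 0 :=
      (Submodule.mem_annihilator_span_singleton u r).mp (hu ▸ hbq hr)
    exact ⟨1, fun h => hqp.ne_top (q.eq_top_iff_one.mpr h), by rw [one_smul, h0]⟩

lemma extend_or_bad {a b : Ideal R} [IsNoetherianRing R] (M : Type u)
    [AddCommGroup M] [Module R M] [Module.Finite R M]
    {n : ℕ} {x : Fin n → R} (hFR : Paper.IsFilterRegular R a M x) :
    (∃ q ∈ associatedPrimes R (M ⧸ (Ideal.span (x '' Set.univ) • (⊤ : Submodule R M))),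
        ¬ a ≤ q ∧ b ≤ q)
    ∨ (∃ z ∈ b, Paper.IsFilterRegular R a M (Fin.snoc x z)) := by
  by_cases hbad : ∃ q ∈ associatedPrimes R
      (M ⧸ (Ideal.span (x '' Set.univ) • (⊤ : Submodule R M))), ¬ a ≤ q ∧ b ≤ q
  · exact Or.inl hbad
  right
  push_neg at hbad
  set F : Set (Ideal R) := {q | q ∈ associatedPrimes R
      (M ⧸ (Ideal.span (x '' Set.univ) • (⊤ : Submodule R M))) ∧ ¬ a ≤ q} with hFdef
  have hFfin : F.Finite :=
    (associatedPrimes_finite (M ⧸ (Ideal.span (x '' Set.univ) • (⊤ : Submodule R M)))).subset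
      (fun q hq => hq.1)
  obtain ⟨z, hzb, hz⟩ := exists_avoid b F hFfin (fun q hq => hq.1.isPrime)
    (fun q hq => hbad q hq.1 hq.2)
  refine ⟨z, hzb, ?_⟩
  intro i
  refine Fin.lastCases ?_ ?_ i
  · rw [snoc_image_lt_last]
    intro p hp hap
    rw [Fin.snoc_last]
    exact hz p ⟨hp, hap⟩
  · intro i
    rw [snoc_image_lt_castSucc]
    intro p hp hap
    rw [Fin.snoc_castSucc]
    exact hFR i p hp hap

lemma exists_maximal [IsNoetherianRing R] {a b : Ideal R} (M : Type u)
    [AddCommGroup M] [Module R M] [Module.Finite R M]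
    {p₀ : Ideal R} (hp₀p : p₀.IsPrime) (hap₀ : ¬ a ≤ p₀)
    (hsupp : ∃ mb : (M ⧸ (b • (⊤ : Submodule R M))), ¬ Tor p₀ mb) :
    ∃ (k : ℕ) (y : Fin k → R), (∀ i, y i ∈ b) ∧ Paper.IsFilterRegular R a M y ∧
      ¬ (∃ z ∈ b, Paper.IsFilterRegular R a M (Fin.snoc y z)) := by
  classical
  set 𝒥 : Set (Ideal R) := {J | ∃ (k : ℕ) (y : Fin k → R), (∀ i, y i ∈ b) ∧
    Paper.IsFilterRegular R a M y ∧ J = Ideal.span (y '' Set.univ)} with h𝒥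
  have h𝒥ne : 𝒥.Nonempty :=
    ⟨Ideal.span ((Fin.elim0 : Fin 0 → R) '' Set.univ), 0, Fin.elim0,
      fun i => i.elim0, fun i => i.elim0, rfl⟩
  obtain ⟨J, hJ, hJmax⟩ :=
    set_has_maximal_iff_noetherian.mpr (inferInstance : IsNoetherian R R) 𝒥 h𝒥ne
  obtain ⟨k, y, hyb, hyFR, rfl⟩ := hJ
  refine ⟨k, y, hyb, hyFR, ?_⟩
  rintro ⟨z, hzb, hzFR⟩
  have hsnocb : ∀ i, (Fin.snoc y z : Fin (k + 1) → R) i ∈ b := by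
    intro i
    refine Fin.lastCases ?_ ?_ i
    · rw [Fin.snoc_last]; exact hzb
    · intro i; rw [Fin.snoc_castSucc]; exact hyb i
  have hJ' : Ideal.span ((Fin.snoc y z : Fin (k + 1) → R) '' Set.univ) ∈ 𝒥 :=
    ⟨k + 1, Fin.snoc y z, hsnocb, hzFR, rfl⟩
  have hspan : Ideal.span ((Fin.snoc y z : Fin (k + 1) → R) '' Set.univ)
      = Ideal.span (y '' Set.univ) ⊔ Ideal.span {z} := by
    rw [snoc_image_univ, Ideal.span_union]
  have hle : Ideal.span (y '' Set.univ)
      ≤ Ideal.span ((Fin.snoc y z : Fin (k + 1) → R) '' Set.univ) := by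
    rw [hspan]; exact le_sup_left
  have heq : Ideal.span ((Fin.snoc y z : Fin (k + 1) → R) '' Set.univ)
      = Ideal.span (y '' Set.univ) := by
    by_contra hne
    exact hJmax _ hJ' (lt_of_le_of_ne hle (Ne.symm hne))
  have hz_mem : z ∈ Ideal.span (y '' Set.univ) := by
    rw [← heq]
    apply Ideal.subset_span
    exact ⟨Fin.last k, trivial, Fin.snoc_last _ _⟩
  obtain ⟨mb, hmb⟩ := hsupp
  obtain ⟨w, hw⟩ := Submodule.Quotient.mk_surjective _ mb
  have hJb : Ideal.span (y '' Set.univ) ≤ b := by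
    rw [Ideal.span_le]
    rintro r ⟨i, _, rfl⟩
    exact hyb i
  have hm' : ¬ Tor p₀ (Submodule.Quotient.mk w :
      M ⧸ (Ideal.span (y '' Set.univ) • (⊤ : Submodule R M))) := by
    rintro ⟨s, hs, hsw⟩
    rw [← Submodule.Quotient.mk_smul, Submodule.Quotient.mk_eq_zero] at hsw
    apply hmb
    refine ⟨s, hs, ?_⟩
    rw [← hw, ← Submodule.Quotient.mk_smul, Submodule.Quotient.mk_eq_zero]
    exact Submodule.smul_mono hJb le_rfl hsw
  obtain ⟨q, hqass, hqp₀, -⟩ := exists_associated_le hp₀p _ hm'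
  have hlast := hzFR (Fin.last k)
  rw [snoc_image_lt_last] at hlast
  have hzq : z ∉ q := by
    have h := hlast q hqass (fun haq => hap₀ (haq.trans hqp₀))
    rwa [Fin.snoc_last] at h
  apply hzq
  obtain ⟨hqprime, v, hv⟩ := assOld hqass
  rw [hv, Submodule.mem_annihilator_span_singleton]
  obtain ⟨v', rfl⟩ := Submodule.Quotient.mk_surjective _ v
  rw [← Submodule.Quotient.mk_smul, Submodule.Quotient.mk_eq_zero]
  exact Submodule.smul_mem_smul hz_mem trivial

end Stmt7Aux


/-- `Supp(M/bM) ⊆ V(a)` iff there are `a`-filter regular `M`-sequences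
in `b` of every length; and if `Supp(M/bM) ⊄ V(a)`, any two maximal `a`-filter
regular `M`-sequences in `b` have the same length. -/
theorem stmt7 {R : Type u} [CommRing R] [IsNoetherianRing R] (a b : Ideal R)
    (M : Type u) [AddCommGroup M] [Module R M] [Module.Finite R M] :
    (Module.support R (M ⧸ (b • (⊤ : Submodule R M))) ⊆
        PrimeSpectrum.zeroLocus (a : Set R) ↔
      ∀ n : ℕ, ∃ x : Fin n → R, (∀ i, x i ∈ b) ∧ Paper.IsFilterRegular R a M x) ∧
    (¬ Module.support R (M ⧸ (b • (⊤ : Submodule R M))) ⊆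
        PrimeSpectrum.zeroLocus (a : Set R) →
      ∀ (m k : ℕ) (x : Fin m → R) (y : Fin k → R),
        (∀ i, x i ∈ b) → Paper.IsFilterRegular R a M x →
        (¬ ∃ z ∈ b, Paper.IsFilterRegular R a M (Fin.snoc x z)) →
        (∀ i, y i ∈ b) → Paper.IsFilterRegular R a M y →
        (¬ ∃ z ∈ b, Paper.IsFilterRegular R a M (Fin.snoc y z)) →
        m = k) := by
  classical
  constructor
  · constructor
    · -- forward direction: extend sequences indefinitely
      intro hsupp n
      induction n with
      | zero => exact ⟨Fin.elim0, fun i => i.elim0, fun i => i.elim0⟩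
      | succ n ih =>
        obtain ⟨x, hxb, hxFR⟩ := ih
        rcases Stmt7Aux.extend_or_bad (b := b) M hxFR with hbad | ⟨z, hzb, hzFR⟩
        · exfalso
          obtain ⟨q, hqass, haq, hbq⟩ := hbad
          have hqprime : q.IsPrime := hqass.isPrime
          have hAnnM : Module.annihilator R M ≤ q := by
            obtain ⟨-, u, hu⟩ := Stmt7Aux.assOld hqass
            intro r hr
            rw [hu, Submodule.mem_annihilator_span_singleton]
            obtain ⟨w, rfl⟩ := Submodule.Quotient.mk_surjective _ u
            rw [← Submodule.Quotient.mk_smul, Module.mem_annihilator.mp hr w,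
              Submodule.Quotient.mk_zero]
          have hAnn2 := Stmt7Aux.ann_quot_le_prime hqprime hAnnM hbq
          have hmem : (⟨q, hqprime⟩ : PrimeSpectrum R) ∈
              Module.support R (M ⧸ (b • (⊤ : Submodule R M))) := by
            rw [Module.support_eq_zeroLocus]
            exact (PrimeSpectrum.mem_zeroLocus _ _).mpr (SetLike.coe_subset_coe.mpr hAnn2)
          exact haq (SetLike.coe_subset_coe.mp ((PrimeSpectrum.mem_zeroLocus _ _).mp (hsupp hmem)))
        · refine ⟨Fin.snoc x z, ?_, hzFR⟩
          intro i
          refine Fin.lastCases ?_ ?_ i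
          · rw [Fin.snoc_last]; exact hzb
          · intro i; rw [Fin.snoc_castSucc]; exact hxb i
    · -- reverse direction
      intro hall p₀ hp₀mem
      rw [PrimeSpectrum.mem_zeroLocus]
      by_contra hap₀'
      have hap₀ : ¬ a ≤ p₀.asIdeal := fun h => hap₀' (SetLike.coe_subset_coe.mpr h)
      have hsupp' : ∃ mb : (M ⧸ (b • (⊤ : Submodule R M))), ¬ Stmt7Aux.Tor p₀.asIdeal mb := by
        obtain ⟨m, hm⟩ := Module.mem_support_iff_exists_annihilator.mp hp₀mem
        exact ⟨m, Stmt7Aux.not_tor_iff_ann_le.mpr hm⟩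
      obtain ⟨k, y, hyb, hyFR, hymax⟩ :=
        Stmt7Aux.exists_maximal (a := a) (b := b) M p₀.2 hap₀ hsupp'
      rcases Stmt7Aux.extend_or_bad (b := b) M hyFR with hbad | hgood
      · obtain ⟨P, hPass, haP, hbP⟩ := hbad
        obtain ⟨x, hxb, hxFR⟩ := hall (k + 1)
        have hk := Stmt7Aux.mainLoc (b := b) hPass.isPrime k M y hyb
          (Stmt7Aux.fr_to_locReg hPass.isPrime haP hyFR)
          (Stmt7Aux.dp_of_ass hPass hbP) (k + 1) x hxb
          (Stmt7Aux.fr_to_locReg hPass.isPrime haP hxFR)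
        omega
      · exact hymax hgood
  · -- equal lengths of maximal sequences
    intro _ m k x y hxb hxFR hxmax hyb hyFR hymax
    have hbadx : ∃ q ∈ associatedPrimes R
        (M ⧸ (Ideal.span (x '' Set.univ) • (⊤ : Submodule R M))), ¬ a ≤ q ∧ b ≤ q := by
      rcases Stmt7Aux.extend_or_bad (b := b) M hxFR with h | h
      · exact h
      · exact absurd h hxmax
    have hbady : ∃ q ∈ associatedPrimes R
        (M ⧸ (Ideal.span (y '' Set.univ) • (⊤ : Submodule R M))), ¬ a ≤ q ∧ b ≤ q := by
      rcases Stmt7Aux.extend_or_bad (b := b) M hyFR with h | h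
      · exact h
      · exact absurd h hymax
    obtain ⟨P, hPass, haP, hbP⟩ := hbadx
    obtain ⟨P', hP'ass, haP', hbP'⟩ := hbady
    have h1 : m ≤ k := Stmt7Aux.mainLoc (b := b) hP'ass.isPrime k M y hyb
      (Stmt7Aux.fr_to_locReg hP'ass.isPrime haP' hyFR)
      (Stmt7Aux.dp_of_ass hP'ass hbP') m x hxb
      (Stmt7Aux.fr_to_locReg hP'ass.isPrime haP' hxFR)
    have h2 : k ≤ m := Stmt7Aux.mainLoc (b := b) hPass.isPrime m M x hxb
      (Stmt7Aux.fr_to_locReg hPass.isPrime haP hxFR)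
      (Stmt7Aux.dp_of_ass hPass hbP) k y hyb
      (Stmt7Aux.fr_to_locReg hPass.isPrime haP hyFR)
    omega
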